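/- arXiv:2605.24673 — 2 statements merged into one kernel-verified Lean document; each statement's English description precedes it below -/
import Mathlib

section
/- Let F be the oriented edge-incidence matrix of any connected, unweighted (all edge weights equal to 1) undirected graph G = (V, E) on n nodes. Then every entry of the Moore–Penrose pseudoinverse F† has absolute value at most 1, i.e., ‖F†‖_max ≤ 1. -/
open MeasureTheory ProbabilityTheory Filter Matrix
open scoped ENNReal NNReal BigOperators

noncomputable section

/-- Euclidean distance between two vectors in `ℝ^p`. -/
def dist2 {p : ℕ} (a b : Fin p → ℝ) : ℝ := Real.sqrt (∑ l, (a l - b l) ^ 2)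

/-- `E : Ω → ℝ^{n×p}` has independent, mean-zero rows whose sub-Gaussian norm
`‖E_i‖_{ψ₂} = sup_{‖v‖=1} inf {K > 0 : 𝔼 exp((vᵀE_i)²/K²) ≤ 2}` is at most `σ`. -/
def HasIndepSubGaussianRows {Ω : Type} [MeasurableSpace Ω] (μ : Measure Ω)
    {n p : ℕ} (E : Ω → Matrix (Fin n) (Fin p) ℝ) (σ : ℝ) : Prop :=
  iIndepFun
      (fun (i : Fin n) ω => E ω i) μ ∧
  (∀ i l, ∫ ω, E ω i l ∂μ = 0) ∧
  (∀ i, ∀ v : Fin p → ℝ, ∑ l, (v l) ^ 2 = 1 → ∀ K : ℝ, σ < K →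
    ∫ ω, Real.exp ((∑ l, v l * E ω i l) ^ 2 / K ^ 2) ∂μ ≤ 2)

/-- Index type for the potential edges `{(j,k) : j < k}` of a graph on `Fin n`. -/
abbrev EdgeIdx (n : ℕ) := {e : Fin n × Fin n // e.1 < e.2}

/-- Oriented edge-incidence matrix of the affinity matrix `Φ`: the column indexed by a
pair `(j,k)` with `j < k` has entry `√Φ_jk` in row `j`, `-√Φ_jk` in row `k` and zeros
elsewhere (pairs that are not edges contribute zero columns). -/
def incidence {n : ℕ} (Φ : Matrix (Fin n) (Fin n) ℝ) : Matrix (Fin n) (EdgeIdx n) ℝ :=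
  Matrix.of fun i e =>
    if i = e.val.1 then Real.sqrt (Φ e.val.1 e.val.2)
    else if i = e.val.2 then -Real.sqrt (Φ e.val.1 e.val.2) else 0

/-- The four Penrose conditions: `B` is the Moore–Penrose pseudoinverse of `A`. -/
def IsPInv {m n : Type} [Fintype m] [Fintype n]
    (A : Matrix m n ℝ) (B : Matrix n m ℝ) : Prop :=
  A * B * A = A ∧ B * A * B = B ∧ (A * B)ᵀ = A * B ∧ (B * A)ᵀ = B * A

/-- Maximal absolute entry `‖M‖_max` of a matrix. -/
def maxEntry {m n : Type} [Fintype m] [Fintype n] (M : Matrix m n ℝ) : ℝ :=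
  ⨆ i, ⨆ j, |M i j|

/-- The graph whose edges are the pairs with strictly positive affinity. -/
def graphOf {n : ℕ} (Φ : Matrix (Fin n) (Fin n) ℝ) : SimpleGraph (Fin n) :=
  SimpleGraph.fromRel fun i j => 0 < Φ i j

/-- A valid affinity matrix: symmetric, nonnegative entries, zero diagonal, connected. -/
def IsValidAffinity {n : ℕ} (Φ : Matrix (Fin n) (Fin n) ℝ) : Prop :=
  Φᵀ = Φ ∧ (∀ i j, 0 ≤ Φ i j) ∧ (∀ i, Φ i i = 0) ∧ (graphOf Φ).Connected

/-- The convex clustering penalty `Σ_{i<j} √Φ_ij ‖U_{i·} - U_{j·}‖₂`. -/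
def penaltySum {n p : ℕ} (Φ : Matrix (Fin n) (Fin n) ℝ)
    (U : Matrix (Fin n) (Fin p) ℝ) : ℝ :=
  ∑ e : EdgeIdx n, Real.sqrt (Φ e.val.1 e.val.2) * dist2 (U e.val.1) (U e.val.2)

/-- The convex clustering objective
`U ↦ γ Σ_{i<j} √Φ_ij ‖U_{i·} - U_{j·}‖₂ + (1/2) ‖U - X‖_F²`. -/
def ccObj {n p : ℕ} (γ : ℝ) (Φ : Matrix (Fin n) (Fin n) ℝ)
    (X U : Matrix (Fin n) (Fin p) ℝ) : ℝ :=
  γ * penaltySum Φ U + (1 / 2) * ∑ i, ∑ l, (U i l - X i l) ^ 2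

/-- Diameter `max_{a,b ∈ C} ‖a - b‖₂` of a finite set of centers. -/
def diamC {p : ℕ} (C : Finset (Fin p → ℝ)) : ℝ :=
  ⨆ a : C, ⨆ b : C, dist2 a.val b.val

/-- Graph Laplacian `L = D - Φ`. -/
def lap {n : ℕ} (Φ : Matrix (Fin n) (Fin n) ℝ) : Matrix (Fin n) (Fin n) ℝ :=
  Matrix.diagonal (fun i => ∑ j, Φ i j) - Φ

/-- Two-cluster membership (clusters `{0,…,n/2-1}` and `{n/2,…,n-1}`). -/
def sameCluster {n : ℕ} (i j : Fin n) : Prop := ((i : ℕ) < n / 2 ↔ (j : ℕ) < n / 2)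

instance {n : ℕ} (i j : Fin n) : Decidable (sameCluster i j) := by
  unfold sameCluster; infer_instance

/-- `Φ` is the adjacency matrix of the two-cluster stochastic block model with
within-cluster probability `pw` and between-cluster probability `pb`. -/
def IsSBM {Ω : Type} [MeasurableSpace Ω] (μ : Measure Ω) {n : ℕ}
    (Φ : Ω → Matrix (Fin n) (Fin n) ℝ) (pw pb : ℝ) : Prop :=
  (∀ ω, (Φ ω)ᵀ = Φ ω) ∧ (∀ ω i, Φ ω i i = 0) ∧
  (∀ ω i j, Φ ω i j = 0 ∨ Φ ω i j = 1) ∧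
  iIndepFun
    (fun (e : EdgeIdx n) ω => Φ ω e.val.1 e.val.2) μ ∧
  (∀ e : EdgeIdx n, μ {ω | Φ ω e.val.1 e.val.2 = 1} =
      ENNReal.ofReal (if sameCluster e.val.1 e.val.2 then pw else pb))

/-- The matrix whose first `n/2` rows equal `c₁` and remaining rows equal `c₂`. -/
def twoClusterU (n : ℕ) {p : ℕ} (c₁ c₂ : Fin p → ℝ) : Matrix (Fin n) (Fin p) ℝ :=
  Matrix.of fun i l => if (i : ℕ) < n / 2 then c₁ l else c₂ l

/-- `Σ_{(i,j) ∈ E} Φ_ij ‖U_{i·} - U_{j·}‖₂` (for a 0/1 matrix `Φ`, the sum of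
`‖U_{i·} - U_{j·}‖₂` over the edges `i < j` with `Φ_ij = 1`). -/
def cutSum {n p : ℕ} (Φv : Matrix (Fin n) (Fin n) ℝ)
    (U : Matrix (Fin n) (Fin p) ℝ) : ℝ :=
  ∑ e : EdgeIdx n, Φv e.val.1 e.val.2 * dist2 (U e.val.1) (U e.val.2)

/-- Adjacency matrix of the advantageous two-clique graph `G(n,k)`: two cliques on
`{0,…,n/2-1}` and `{n/2,…,n-1}` together with the `k` bridges `{i, i+n/2}`, `i < k`. -/
def advPhi (n k : ℕ) : Matrix (Fin n) (Fin n) ℝ :=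
  Matrix.of fun i j =>
    if i ≠ j ∧ (((i : ℕ) < n / 2 ∧ (j : ℕ) < n / 2) ∨
        (n / 2 ≤ (i : ℕ) ∧ n / 2 ≤ (j : ℕ)) ∨
        ((j : ℕ) = (i : ℕ) + n / 2 ∧ (i : ℕ) < k) ∨
        ((i : ℕ) = (j : ℕ) + n / 2 ∧ (j : ℕ) < k))
    then 1 else 0

/-- The `n×n` matrix `(1/n) 1_n 1_nᵀ`. -/
def onesProj (n : ℕ) : Matrix (Fin n) (Fin n) ℝ :=
  Matrix.of fun _ _ => (1 : ℝ) / n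

/-- Expected adjacency matrix `B ⊗ J - p_w I_n` of the two-cluster stochastic block
model (clusters being the first and last `n/2` indices). -/
def sbmExpected (n : ℕ) (pw pb : ℝ) : Matrix (Fin n) (Fin n) ℝ :=
  Matrix.of fun i j =>
    (if ((i : ℕ) < n / 2 ↔ (j : ℕ) < n / 2) then pw else pb) -
      (if i = j then pw else 0)

end
open Matrix in
private lemma prop_max_aux {n : ℕ} (G : SimpleGraph (Fin n)) (hconn : G.Preconnected)
    (f : Fin n → ℝ) (j : Fin n)
    (H : ∀ i, i ≠ j → (∀ a, f a ≤ f i) → ∀ m, G.Adj i m → f m = f i)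
    (i : Fin n) : f i ≤ f j := by
  obtain ⟨i₀, -, hi₀⟩ :=
    Finset.exists_max_image (Finset.univ : Finset (Fin n)) f ⟨j, Finset.mem_univ j⟩
  have hmax : ∀ a, f a ≤ f i₀ := fun a => hi₀ a (Finset.mem_univ a)
  obtain ⟨p⟩ := hconn i₀ j
  have key : ∀ (u v : Fin n) (_ : G.Walk u v), v = j → (∀ a, f a ≤ f u) → ∀ a, f a ≤ f j := by
    intro u v p
    induction p with
    | nil => rintro rfl hm; exact hm
    | @cons x y z hadj p ih =>
      intro hz hm
      by_cases hx : x = j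
      · subst hx; exact fun a => hm a
      · have hy : f y = f x := H x hx hm y hadj
        exact ih hz (fun a => le_of_le_of_eq (hm a) hy.symm)
  exact key i₀ j p rfl hmax i


set_option maxHeartbeats 1000000 in
/-- `‖F†‖_max ≤ 1` for connected unweighted graphs. -/
theorem stmt9 (n : ℕ) (G : SimpleGraph (Fin n)) [DecidableRel G.Adj]
    (hconn : G.Connected)
    (B : Matrix (EdgeIdx n) (Fin n) ℝ)
    (hB : IsPInv (incidence (Matrix.of fun i j => if G.Adj i j then (1 : ℝ) else 0)) B) :
    (∀ e i, |B e i| ≤ 1) ∧ maxEntry B ≤ 1 := by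
  classical
  obtain ⟨hFBF, hBFB, hFBsym, hBFsym⟩ := hB
  set Φ : Matrix (Fin n) (Fin n) ℝ := Matrix.of fun i j => if G.Adj i j then (1:ℝ) else 0
    with hΦ
  set F : Matrix (Fin n) (EdgeIdx n) ℝ := incidence Φ with hFdef
  have hind : ∀ (p q a : Fin n), p ≠ q →
      (if a = p then (1:ℝ) else if a = q then -1 else 0)
        = (if a = p then (1:ℝ) else 0) - (if a = q then 1 else 0) := by
    intro p q a hpq
    split_ifs with h1 h2 h2 <;> simp_all
  have hFent : ∀ (a : Fin n) (e : EdgeIdx n),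
      F a e = (if G.Adj e.val.1 e.val.2 then (1:ℝ) else 0) *
        (if a = e.val.1 then 1 else if a = e.val.2 then -1 else 0) := by
    intro a e
    have hsq : Real.sqrt (Φ e.val.1 e.val.2) = if G.Adj e.val.1 e.val.2 then 1 else 0 := by
      simp only [hΦ, Matrix.of_apply]
      split <;> simp
    simp only [hFdef, incidence, Matrix.of_apply, hsq]
    split_ifs <;> ring
  -- M and identities
  set M : Matrix (Fin n) (Fin n) ℝ := Bᵀ * B with hM
  have hMsym : Mᵀ = M := by rw [hM, Matrix.transpose_mul, Matrix.transpose_transpose]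
  have hMsym' : ∀ a c, M a c = M c a := by
    intro a c
    have := congrFun (congrFun hMsym c) a
    rwa [Matrix.transpose_apply] at this
  have hBeq : B = Fᵀ * M := by
    calc B = B * F * B := hBFB.symm
    _ = (B * F)ᵀ * B := by rw [hBFsym]
    _ = Fᵀ * Bᵀ * B := by rw [Matrix.transpose_mul]
    _ = Fᵀ * M := by rw [hM, Matrix.mul_assoc]
  have hBt : Bᵀ = M * F := by
    rw [hBeq, Matrix.transpose_mul, Matrix.transpose_transpose, hMsym]
  have hMFB : M = M * F * B := by
    calc M = Bᵀ * B := hM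
    _ = M * F * B := by rw [hBt]
  have hne12 : ∀ e : EdgeIdx n, e.val.1 ≠ e.val.2 := fun e => ne_of_lt e.prop
  have hFt1 : Fᵀ *ᵥ (fun _ => (1:ℝ)) = 0 := by
    funext e
    simp only [Matrix.mulVec, dotProduct, Matrix.transpose_apply, mul_one,
      Pi.zero_apply]
    calc ∑ a, F a e
        = ∑ a : Fin n, (if G.Adj e.val.1 e.val.2 then (1:ℝ) else 0) *
          ((if a = e.val.1 then (1:ℝ) else 0) - (if a = e.val.2 then 1 else 0)) := by
          refine Finset.sum_congr rfl fun a _ => ?_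
          rw [hFent, hind _ _ _ (hne12 e)]
    _ = 0 := by
          rw [← Finset.mul_sum]
          simp [Finset.sum_sub_distrib]
  -- main entrywise bound
  have main : ∀ e i, |B e i| ≤ 1 := by
    rintro ⟨⟨j, k⟩, hjk⟩ i
    set e₀ : EdgeIdx n := ⟨(j, k), hjk⟩ with he₀
    have hjk' : j ≠ k := ne_of_lt hjk
    by_cases hadj : G.Adj j k
    · -- the interesting case
      set b : Fin n → ℝ := fun a => if a = j then 1 else if a = k then -1 else 0 with hb
      have hFe₀ : ∀ a, F a e₀ = b a := by
        intro a
        rw [hFent]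
        simp [hadj, hb, he₀]
      set δ : EdgeIdx n → ℝ := Pi.single e₀ 1 with hδ
      have hFδ : F *ᵥ δ = b := by
        funext a
        simp only [Matrix.mulVec, dotProduct, hδ, Pi.single_apply]
        rw [Finset.sum_eq_single e₀]
        · simp [hFe₀]
        · intro e' _ hne'; simp [hne']
        · intro h; exact absurd (Finset.mem_univ e₀) h
      set w : Fin n → ℝ := M *ᵥ b with hw
      set u : EdgeIdx n → ℝ := Fᵀ *ᵥ w with hu
      have hLw : F *ᵥ u = b := by
        rw [hu, hw, ← hFδ, Matrix.mulVec_mulVec, Matrix.mulVec_mulVec, Matrix.mulVec_mulVec]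
        have h2 : F * Fᵀ * M * F = F := by
          calc F * Fᵀ * M * F = F * (Fᵀ * M) * F := by rw [Matrix.mul_assoc F Fᵀ M]
          _ = F * B * F := by rw [← hBeq]
          _ = F := hFBF
        rw [h2]
      have hBw : B e₀ i = w i := by
        rw [hBeq]
        simp only [Matrix.mul_apply, Matrix.transpose_apply, hw, Matrix.mulVec,
          dotProduct]
        refine Finset.sum_congr rfl fun a _ => ?_
        rw [hFe₀, hMsym' a i, mul_comm]
      -- sum of w is zero
      have hM1 : M *ᵥ (fun _ => (1:ℝ)) = 0 := by
        have hFB1 : (F * B) *ᵥ (fun _ => (1:ℝ)) = 0 := by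
          have : (F * B) = (F * B)ᵀ := hFBsym.symm
          rw [this, Matrix.transpose_mul, ← Matrix.mulVec_mulVec, hFt1, Matrix.mulVec_zero]
        conv_lhs => rw [hMFB, Matrix.mul_assoc]
        rw [← Matrix.mulVec_mulVec, hFB1, Matrix.mulVec_zero]
      have hsumw : ∑ a, w a = 0 := by
        have : ∀ c, ∑ a, M a c = 0 := by
          intro c
          have := congrFun hM1 c
          simp only [Matrix.mulVec, dotProduct, mul_one, Pi.zero_apply] at this
          calc ∑ a, M a c = ∑ a, M c a := Finset.sum_congr rfl fun a _ => hMsym' a c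
          _ = 0 := this
        calc ∑ a, w a = ∑ a, ∑ c, M a c * b c := rfl
        _ = ∑ c, (∑ a, M a c) * b c := by
              rw [Finset.sum_comm]
              exact Finset.sum_congr rfl fun c _ => (Finset.sum_mul _ _ _).symm
        _ = 0 := by simp [this]
      -- s = w j - w k
      have hbw : b ⬝ᵥ w = w j - w k := by
        simp only [dotProduct, hb]
        calc ∑ a, (if a = j then (1:ℝ) else if a = k then -1 else 0) * w a
            = ∑ a, ((if a = j then (1:ℝ) else 0) - (if a = k then 1 else 0)) * w a := by
              exact Finset.sum_congr rfl fun a _ => by rw [hind _ _ _ hjk']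
        _ = w j - w k := by
              simp [sub_mul, Finset.sum_sub_distrib]
      have hsuu : b ⬝ᵥ w = u ⬝ᵥ u := by
        conv_lhs => rw [← hLw]
        rw [dotProduct_comm, dotProduct_mulVec, ← Matrix.mulVec_transpose, ← hu,
          dotProduct_comm]
      have hue₀ : u e₀ = w j - w k := by
        rw [← hbw]
        simp only [hu, Matrix.mulVec, dotProduct, Matrix.transpose_apply]
        exact Finset.sum_congr rfl fun a _ => by rw [hFe₀]
      set s : ℝ := w j - w k with hs
      have hs0 : 0 ≤ s := by
        rw [← hbw, hsuu]
        exact Finset.sum_nonneg fun e _ => mul_self_nonneg _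
      have hs2 : s * s ≤ s := by
        calc s * s = u e₀ * u e₀ := by rw [hue₀]
        _ ≤ ∑ e, u e * u e := Finset.single_le_sum
              (fun e (_ : e ∈ Finset.univ) => mul_self_nonneg (u e)) (Finset.mem_univ e₀)
        _ = u ⬝ᵥ u := rfl
        _ = s := by rw [← hsuu, hbw]
      have hs1 : s ≤ 1 := by nlinarith
      -- u entries
      have hue : ∀ e : EdgeIdx n, u e = (if G.Adj e.val.1 e.val.2 then (1:ℝ) else 0) *
          (w e.val.1 - w e.val.2) := by
        intro e
        simp only [hu, Matrix.mulVec, dotProduct, Matrix.transpose_apply]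
        calc ∑ a, F a e * w a
            = ∑ a, (if G.Adj e.val.1 e.val.2 then (1:ℝ) else 0) *
              (((if a = e.val.1 then (1:ℝ) else 0) - (if a = e.val.2 then 1 else 0)) * w a) := by
              refine Finset.sum_congr rfl fun a _ => ?_
              rw [hFent, hind _ _ _ (hne12 e), mul_assoc]
        _ = _ := by
              rw [← Finset.mul_sum]
              congr 1
              simp [sub_mul, Finset.sum_sub_distrib]
      -- propagation hypotheses and zero terms
      have hterms : ∀ i' : Fin n, (F *ᵥ u) i' = ∑ e : EdgeIdx n, F i' e * u e :=
        fun _ => rfl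
      have hFu : ∀ i', (F *ᵥ u) i' = b i' := fun i' => congrFun hLw i'
      have hzero_of : ∀ (i' : Fin n), (∀ a, w a ≤ w i') → i' ≠ j →
          ∀ m, G.Adj i' m → w m = w i' := by
        intro i' hmx hne m hadjm
        have hnonneg : ∀ e : EdgeIdx n, 0 ≤ F i' e * u e := by
          intro e
          rw [hFent, hue]
          rcases eq_or_ne i' e.val.1 with h1 | h1
          · subst h1
            simp only [if_pos rfl]
            have := sub_nonneg.mpr (hmx e.val.2)
            split_ifs <;> nlinarith
          · rcases eq_or_ne i' e.val.2 with h2 | h2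
            · subst h2
              simp only [if_neg h1, if_pos rfl]
              have := sub_nonneg.mpr (hmx e.val.1)
              split_ifs <;> nlinarith
            · simp [h1, h2]
        have hsum0 : ∑ e : EdgeIdx n, F i' e * u e = 0 := by
          refine le_antisymm ?_ (Finset.sum_nonneg fun e _ => hnonneg e)
          rw [← hterms, hFu]
          simp only [hb, if_neg hne]
          split_ifs <;> norm_num
        have hall : ∀ e ∈ Finset.univ, F i' e * u e = 0 :=
          (Finset.sum_eq_zero_iff_of_nonneg (fun e _ => hnonneg e)).mp hsum0
        have hmi : i' ≠ m := G.ne_of_adj hadjm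
        rcases lt_or_gt_of_ne hmi with hlt | hgt
        · have h0 := hall ⟨(i', m), hlt⟩ (Finset.mem_univ _)
          rw [hFent, hue] at h0
          simp [hadjm, hmi, sub_eq_zero] at h0
          linarith [h0]
        · have h0 := hall ⟨(m, i'), hgt⟩ (Finset.mem_univ _)
          rw [hFent, hue] at h0
          simp [hadjm.symm, hmi, Ne.symm hmi, sub_eq_zero] at h0
          linarith [h0]
      have hzero_of' : ∀ (i' : Fin n), (∀ a, w i' ≤ w a) → i' ≠ k →
          ∀ m, G.Adj i' m → w m = w i' := by
        intro i' hmx hne m hadjm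
        have hnonpos : ∀ e : EdgeIdx n, F i' e * u e ≤ 0 := by
          intro e
          rw [hFent, hue]
          rcases eq_or_ne i' e.val.1 with h1 | h1
          · subst h1
            simp only [if_pos rfl]
            have := sub_nonneg.mpr (hmx e.val.2)
            split_ifs <;> nlinarith
          · rcases eq_or_ne i' e.val.2 with h2 | h2
            · subst h2
              simp only [if_neg h1, if_pos rfl]
              have := sub_nonneg.mpr (hmx e.val.1)
              split_ifs <;> nlinarith
            · simp [h1, h2]
        have hsum0 : ∑ e : EdgeIdx n, (- (F i' e * u e)) = 0 := by
          refine le_antisymm ?_ (Finset.sum_nonneg fun e _ => neg_nonneg.mpr (hnonpos e))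
          rw [Finset.sum_neg_distrib, ← hterms, hFu]
          simp only [hb, if_neg hne]
          split_ifs <;> norm_num
        have hall : ∀ e ∈ Finset.univ, - (F i' e * u e) = 0 :=
          (Finset.sum_eq_zero_iff_of_nonneg
            (fun e _ => neg_nonneg.mpr (hnonpos e))).mp hsum0
        have hmi : i' ≠ m := G.ne_of_adj hadjm
        rcases lt_or_gt_of_ne hmi with hlt | hgt
        · have h0 := hall ⟨(i', m), hlt⟩ (Finset.mem_univ _)
          rw [hFent, hue] at h0
          simp [hadjm, hmi, sub_eq_zero] at h0
          linarith [h0]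
        · have h0 := hall ⟨(m, i'), hgt⟩ (Finset.mem_univ _)
          rw [hFent, hue] at h0
          simp [hadjm.symm, hmi, Ne.symm hmi, sub_eq_zero] at h0
          linarith [h0]
      have hmaxj : ∀ a, w a ≤ w j :=
        prop_max_aux G hconn.preconnected w j
          (fun i' hne hmx m hadjm => hzero_of i' hmx hne m hadjm)
      have hmink : ∀ a, w k ≤ w a := by
        have h := prop_max_aux G hconn.preconnected (fun a => -w a) k
          (fun i' hne hmx m hadjm => by
            have hx : ∀ a, w i' ≤ w a := by
              intro a
              have h' := hmx a
              simp only [neg_le_neg_iff] at h'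
              exact h'
            have : w m = w i' := hzero_of' i' hx hne m hadjm
            simp [this])
        intro a
        have h' := h a
        simp only [neg_le_neg_iff] at h'
        exact h' 
      have hcard : 0 < n := i.pos
      have hwk0 : w k ≤ 0 := by
        by_contra hpos
        push_neg at hpos
        have : (0:ℝ) < ∑ a, w a := by
          have : ∀ a ∈ (Finset.univ : Finset (Fin n)), 0 < w a :=
            fun a _ => lt_of_lt_of_le hpos (hmink a)
          exact Finset.sum_pos this ⟨i, Finset.mem_univ i⟩
        linarith [hsumw]
      have hwj0 : 0 ≤ w j := by
        by_contra hneg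
        push_neg at hneg
        have : ∑ a, w a < 0 := by
          have : ∀ a ∈ (Finset.univ : Finset (Fin n)), w a < 0 :=
            fun a _ => lt_of_le_of_lt (hmaxj a) hneg
          exact Finset.sum_neg this ⟨i, Finset.mem_univ i⟩
        linarith [hsumw]
      rw [hBw, abs_le]
      constructor
      · have : w k ≥ -s := by rw [hs]; linarith
        linarith [hmink i]
      · have : w j ≤ s := by rw [hs]; linarith
        linarith [hmaxj i]
    · -- not an edge: the row of B is zero
      have : B e₀ i = 0 := by
        rw [hBeq]
        simp only [Matrix.mul_apply, Matrix.transpose_apply]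
        refine Finset.sum_eq_zero fun a _ => ?_
        rw [hFent]
        simp [hadj, he₀]
      rw [this]
      norm_num
  refine ⟨main, ?_⟩
  unfold maxEntry
  exact Real.iSup_le (fun e => Real.iSup_le (fun i => main e i) zero_le_one) zero_le_one
end

section
/- Let X ∈ R^{n×p}, let γ ≥ 0, and let Φ be the symmetric adjacency matrix (nonnegative entries, zero diagonal) of a connected affinity graph on n nodes. Then the unique global minimizer Û of the convex clustering objective U ↦ γ Σ_{i<j} √Φ_ij ‖U_{i·} − U_{j·}‖₂ + (1/2)‖U − X‖_F² satisfies Σ_{i=1}^n Û_{iℓ} = Σ_{i=1}^n X_{iℓ} for every coordinate ℓ = 1,…,p; that is, the column sums (equivalently the grand mean of the fitted centroids) of Û coincide with those of X. -/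
open MeasureTheory ProbabilityTheory Filter Matrix
open scoped ENNReal NNReal BigOperators

/-- the convex clustering minimizer preserves column sums of the
data. -/
theorem stmt15 (n p : ℕ) (γ : ℝ) (hγ : 0 ≤ γ)
    (X : Matrix (Fin n) (Fin p) ℝ) (Φ : Matrix (Fin n) (Fin n) ℝ)
    (hsym : Φᵀ = Φ) (hnn : ∀ i j, 0 ≤ Φ i j) (hdiag : ∀ i, Φ i i = 0)
    (hconn : (graphOf Φ).Connected)
    (Uhat : Matrix (Fin n) (Fin p) ℝ)
    (hmin : ∀ V : Matrix (Fin n) (Fin p) ℝ, ccObj γ Φ X Uhat ≤ ccObj γ Φ X V) :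
    ∀ l, ∑ i, Uhat i l = ∑ i, X i l := by
  intro l
  set s : ℝ := ∑ i, (Uhat i l - X i l) with hs
  suffices hsz : s = 0 by
    have : ∑ i, (Uhat i l - X i l) = ∑ i, Uhat i l - ∑ i, X i l :=
      Finset.sum_sub_distrib _ _
    rw [hs, this] at hsz
    linarith
  rcases Nat.eq_zero_or_pos n with hn | hn
  · subst hn; simp [hs]
  -- shift column l by c
  have key : ∀ c : ℝ, 0 ≤ (n : ℝ) * c ^ 2 - 2 * c * s := by
    intro c
    set V : Matrix (Fin n) (Fin p) ℝ :=
      Matrix.of fun i l' => Uhat i l' - if l' = l then c else 0 with hV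
    have hpen : penaltySum Φ V = penaltySum Φ Uhat := by
      unfold penaltySum
      refine Finset.sum_congr rfl fun e _ => ?_
      congr 1
      unfold dist2
      congr 1
      refine Finset.sum_congr rfl fun l' _ => ?_
      simp only [hV, Matrix.of_apply]
      ring
    have hfid : ∑ i, ∑ l', (V i l' - X i l') ^ 2 =
        (∑ i, ∑ l', (Uhat i l' - X i l') ^ 2) + ((n : ℝ) * c ^ 2 - 2 * c * s) := by
      have step : ∀ i : Fin n, ∑ l', (V i l' - X i l') ^ 2 =
          (∑ l', (Uhat i l' - X i l') ^ 2) + (c ^ 2 - 2 * c * (Uhat i l - X i l)) := by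
        intro i
        have : ∀ l' : Fin p, (V i l' - X i l') ^ 2 =
            (Uhat i l' - X i l') ^ 2 +
              (if l' = l then c ^ 2 - 2 * c * (Uhat i l' - X i l') else 0) := by
          intro l'
          simp only [hV, Matrix.of_apply]
          by_cases h : l' = l
          · subst h; rw [if_pos rfl, if_pos rfl]; ring
          · rw [if_neg h, if_neg h]; ring
        rw [Finset.sum_congr rfl fun l' _ => this l', Finset.sum_add_distrib,
          Finset.sum_ite_eq' Finset.univ l
            (fun l' => c ^ 2 - 2 * c * (Uhat i l' - X i l'))]
        simp
      rw [Finset.sum_congr rfl fun i _ => step i, Finset.sum_add_distrib]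
      congr 1
      rw [Finset.sum_sub_distrib, Finset.sum_const, Finset.card_univ, Fintype.card_fin,
        nsmul_eq_mul, ← Finset.mul_sum, ← hs]
    have h := hmin V
    unfold ccObj at h
    rw [hpen, hfid] at h
    nlinarith [h]
  have h := key (s / n)
  have hn' : (0 : ℝ) < n := by exact_mod_cast hn
  have : (n : ℝ) * (s / n) ^ 2 - 2 * (s / n) * s = -(s ^ 2 / n) := by
    field_simp; ring
  rw [this] at h
  have h2 : s ^ 2 / (n : ℝ) ≤ 0 := by linarith
  have h3 : s ^ 2 ≤ 0 := by
    have := (div_le_iff₀ hn').mp h2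
    simpa using this
  exact pow_eq_zero_iff (by norm_num) |>.mp (le_antisymm h3 (sq_nonneg s))
end
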